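/- With the notation of the previous statement, the function λ : N₁ → [0,∞] is monotone decreasing along the semiflow in the sense that λ(x χ t) ≤ λ(x) whenever x χ [0,t] ⊂ N₁, and hence N₂' := λ^{-1}([0, T+1]) is positively invariant relative to N₁. -/

import Mathlib

open Set MeasureTheory
open scoped ENNReal

theorem stmt16 {X : Type*} [MetricSpace X] [MeasurableSpace X]
    (χ : ℝ → X → X)
    (hcont : Continuous fun p : ℝ × X => χ p.1 p.2)
    (hzero : ∀ z, χ 0 z = z)
    (hsemi : ∀ s t : ℝ, 0 ≤ s → 0 ≤ t → ∀ z, χ s (χ t z) = χ (s + t) z)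
    (N₁ N₂ : Set X) (hsub : N₂ ⊆ N₁) (h₁ : IsClosed N₁) (h₂ : IsClosed N₂)
    -- (IP2), (IP3)
    (hIP2 : ∀ x ∈ N₁, ∀ t : ℝ, 0 ≤ t → χ t x ∉ N₁ → ∃ s ∈ Icc (0:ℝ) t, χ s x ∈ N₂)
    (hIP3 : ∀ x ∈ N₂, ∀ t : ℝ, 0 ≤ t → χ t x ∉ N₂ → ∃ s ∈ Icc (0:ℝ) t, χ s x ∉ N₁)
    -- the exit time T
    (T : X → ℝ≥0∞)
    (hT : ∀ x ∈ N₁, T x = sSup {t : ℝ≥0∞ |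
      ∀ s : ℝ, 0 ≤ s → ENNReal.ofReal s ≤ t → χ s x ∈ N₁ \ N₂})
    -- the fixed time Tc > 0 such that N₂^{-Tc} is a neighbourhood of N₂ in N₁
    (Tc : ℝ) (hTc : 0 < Tc)
    (hnbhd : ∀ x (hx : x ∈ N₂), {y : N₁ | ∃ s ∈ Icc (0:ℝ) Tc, χ s (y : X) ∈ N₂} ∈
      nhds (⟨x, hsub hx⟩ : N₁))
    -- the Urysohn function f
    (f : X → ℝ) (hfcont : ContinuousOn f N₁)
    (hf01 : ∀ x ∈ N₁, f x ∈ Icc (0:ℝ) 1)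
    (hf0 : ∀ x ∈ N₂, f x = 0)
    (hf1 : ∀ x ∈ closure (N₁ \ {y ∈ N₁ | ∃ s ∈ Icc (0:ℝ) Tc, χ s y ∈ N₂}), f x = 1)
    -- λ(x) = ∫₀^{T(x)} f(x χ s) ds
    (lam : X → ℝ≥0∞)
    (hlam : ∀ x ∈ N₁, lam x =
      ∫⁻ s in {s : ℝ | 0 ≤ s ∧ ENNReal.ofReal s < T x}, ENNReal.ofReal (f (χ s x)))
    -- T vanishes on N₂ and satisfies the flow property
    (hT0 : ∀ x ∈ N₂, T x = 0)
    (hTflow : ∀ x ∈ N₁, ∀ t : ℝ, 0 ≤ t → (∀ s ∈ Icc (0:ℝ) t, χ s x ∈ N₁ \ N₂) →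
      T (χ t x) = T x - ENNReal.ofReal t) :
    -- λ is monotone decreasing along the semiflow ...
    (∀ x ∈ N₁, ∀ t : ℝ, 0 ≤ t → (∀ s ∈ Icc (0:ℝ) t, χ s x ∈ N₁) →
      lam (χ t x) ≤ lam x) ∧
    -- ... hence N₂' := λ⁻¹([0, Tc+1]) is positively invariant relative to N₁
    (∀ x ∈ N₁, lam x ≤ ENNReal.ofReal (Tc + 1) →
      ∀ t : ℝ, 0 ≤ t → (∀ s ∈ Icc (0:ℝ) t, χ s x ∈ N₁) →
        lam (χ t x) ≤ ENNReal.ofReal (Tc + 1)) := by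
  have key : ∀ x ∈ N₁, ∀ t : ℝ, 0 ≤ t → (∀ s ∈ Icc (0:ℝ) t, χ s x ∈ N₁) →
      lam (χ t x) ≤ lam x := by
    intro x hx t ht hstay
    have hχt : χ t x ∈ N₁ := hstay t ⟨ht, le_refl t⟩
    by_cases hc : ∃ s ∈ Icc (0:ℝ) t, χ s x ∈ N₂
    · -- the orbit enters N₂, hence stays in N₂ (by IP3), so λ(χ t x) = 0
      obtain ⟨s₀, hs₀, hmem⟩ := hc
      have hxt2 : χ t x ∈ N₂ := by
        by_contra hnot
        have h1 : χ (t - s₀) (χ s₀ x) = χ t x := by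
          rw [hsemi (t - s₀) s₀ (by linarith [hs₀.2]) hs₀.1]
          ring_nf
        obtain ⟨s, hs, hout⟩ := hIP3 _ hmem (t - s₀) (by linarith [hs₀.2])
          (by rw [h1]; exact hnot)
        have hmem' : χ (s + s₀) x ∈ N₁ :=
          hstay (s + s₀) ⟨by linarith [hs.1, hs₀.1], by linarith [hs.2]⟩
        rw [← hsemi s s₀ hs.1 hs₀.1] at hmem'
        exact hout hmem'
      rw [hlam _ hχt, hT0 _ hxt2]
      have hzeroSet : {s : ℝ | 0 ≤ s ∧ ENNReal.ofReal s < 0} = ∅ := by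
        ext s; simp
      rw [hzeroSet]
      simp
    · -- the orbit stays in N₁ \ N₂, so use the flow property of T
      push_neg at hc
      have hstay' : ∀ s ∈ Icc (0:ℝ) t, χ s x ∈ N₁ \ N₂ := fun s hs => ⟨hstay s hs, hc s hs⟩
      have hTt := hTflow x hx t ht hstay'
      rw [hlam _ hχt, hlam _ hx]
      set A := {s : ℝ | 0 ≤ s ∧ ENNReal.ofReal s < T (χ t x)} with hAdef
      set B' := {u : ℝ | t ≤ u ∧ ENNReal.ofReal u < T x} with hB'def
      have hApre : A = (fun s : ℝ => s + t) ⁻¹' B' := by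
        ext s
        simp only [hAdef, hB'def, mem_preimage, mem_setOf_eq, hTt]
        constructor
        · rintro ⟨hs0, hlt⟩
          refine ⟨by linarith, ?_⟩
          rw [lt_tsub_iff_right] at hlt
          rwa [ENNReal.ofReal_add hs0 ht]
        · rintro ⟨hst, hlt⟩
          have hs0 : 0 ≤ s := by linarith
          refine ⟨hs0, ?_⟩
          rw [lt_tsub_iff_right, ← ENNReal.ofReal_add hs0 ht]
          exact hlt
      have hAmeas : MeasurableSet A := by
        have : A = Ici (0:ℝ) ∩ ENNReal.ofReal ⁻¹' Iio (T (χ t x)) := by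
          ext s; simp [hAdef, and_comm]
        rw [this]
        exact measurableSet_Ici.inter (ENNReal.measurable_ofReal measurableSet_Iio)
      calc ∫⁻ s in A, ENNReal.ofReal (f (χ s (χ t x)))
          = ∫⁻ s in A, ENNReal.ofReal (f (χ (s + t) x)) := by
            refine setLIntegral_congr_fun hAmeas ?_
            intro s hs
            dsimp only
            rw [hsemi s t hs.1 ht]
        _ = ∫⁻ u in B', ENNReal.ofReal (f (χ u x)) := by
            rw [hApre]
            exact (measurePreserving_add_right volume t).setLIntegral_comp_preimage_emb
              (MeasurableEquiv.addRight t).measurableEmbedding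
              (fun u => ENNReal.ofReal (f (χ u x))) B'
        _ ≤ ∫⁻ u in {s : ℝ | 0 ≤ s ∧ ENNReal.ofReal s < T x},
              ENNReal.ofReal (f (χ u x)) := by
            refine lintegral_mono_set ?_
            intro u hu
            exact ⟨le_trans ht hu.1, hu.2⟩
  refine ⟨key, ?_⟩
  intro x hx hle t ht hstay
  exact le_trans (key x hx t ht hstay) hle
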